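/- Let M be a fine monoid (integral and finitely generated) and K a field. Then the saturation M^sat of M inside M^gp is a finitely generated monoid. -/

import Mathlib

/-- `η : M →+ G` exhibits the abelian group `G` as the groupification of the
commutative monoid `M`. -/
def IsGroupification {M G : Type*} [AddCommMonoid M] [AddCommGroup G] (η : M →+ G) : Prop :=
  (∀ x : G, ∃ a b : M, x = η a - η b) ∧
  (∀ a b : M, η a = η b ↔ ∃ k : M, a + k = b + k)

/-- A commutative monoid is sharp if its unit group is trivial. -/
def IsSharp (M : Type*) [AddCommMonoid M] : Prop := ∀ x : M, IsAddUnit x → x = 0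

/-- A morphism of monoids is local if the preimage of the unit group is the unit group. -/
def IsLocalMonoidHom {N M : Type*} [AddCommMonoid N] [AddCommMonoid M] (f : N →+ M) : Prop :=
  ∀ n : N, IsAddUnit (f n) → IsAddUnit n

/-- `(P, iM, iL)` is the push-out `M ⊔_N L` of `f : N →+ M` and `g : N →+ L` in the
category of commutative monoids. -/
def IsMonPushout {N M L P : Type*} [AddCommMonoid N] [AddCommMonoid M] [AddCommMonoid L]
    [AddCommMonoid P] (f : N →+ M) (g : N →+ L) (iM : M →+ P) (iL : L →+ P) : Prop :=
  iM.comp f = iL.comp g ∧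
  ∀ (Q : Type*) [AddCommMonoid Q] (jM : M →+ Q) (jL : L →+ Q),
    jM.comp f = jL.comp g → ∃! h : P →+ Q, h.comp iM = jM ∧ h.comp iL = jL

/-- The saturation of a subset `P` of an abelian group `G`:
`P^sat = { x ∈ G | ∃ a ≥ 1, a • x ∈ P }`. -/
def saturationOf {G : Type*} [AddCommGroup G] (P : Set G) : Set G :=
  {x : G | ∃ a : ℕ, 0 < a ∧ a • x ∈ P}

/- ### Auxiliary machinery for the proof (Gordan's lemma) ### -/

open AddSubmonoid in
private lemma mem_closure_finset_iff {M : Type*} [AddCommMonoid M] (T : Finset M) (x : M) :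
    x ∈ closure (T : Set M) ↔ ∃ c : T → ℕ, x = ∑ i : T, c i • (i : M) := by
  classical
  constructor
  · intro hx
    induction hx using closure_induction with
    | mem y hy =>
      refine ⟨fun i => if i = (⟨y, hy⟩ : T) then 1 else 0, ?_⟩
      simp [ite_smul]
    | zero => exact ⟨0, by simp⟩
    | add x y hx hy ihx ihy =>
      obtain ⟨c₁, rfl⟩ := ihx
      obtain ⟨c₂, rfl⟩ := ihy
      exact ⟨c₁ + c₂, by simp [add_nsmul, Finset.sum_add_distrib]⟩
  · rintro ⟨c, rfl⟩
    exact sum_mem _ fun i _ => nsmul_mem (subset_closure i.2) _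

private def satSubmonoid {G : Type*} [AddCommGroup G] (N : AddSubmonoid G) : AddSubmonoid G where
  carrier := saturationOf (N : Set G)
  zero_mem' := ⟨1, one_pos, by simpa using N.zero_mem⟩
  add_mem' := by
    rintro x y ⟨a, ha, hax⟩ ⟨b, hb, hby⟩
    refine ⟨a * b, Nat.mul_pos ha hb, ?_⟩
    have h1 : (a * b) • x = b • (a • x) := by rw [mul_comm, mul_smul]
    have h2 : (a * b) • y = a • (b • y) := by rw [mul_smul]
    rw [smul_add, h1, h2]
    exact N.add_mem (N.nsmul_mem hax b) (N.nsmul_mem hby a)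

private lemma mem_satSubmonoid {G : Type*} [AddCommGroup G] {N : AddSubmonoid G} {x : G} :
    x ∈ satSubmonoid N ↔ ∃ a : ℕ, 0 < a ∧ a • x ∈ N := Iff.rfl

open AddSubmonoid in
private lemma gordan {V : Type*} [AddCommGroup V] [Module ℤ V] [Module.Finite ℤ V]
    [Module.Free ℤ V] (N : AddSubmonoid V) (hN : N.FG) : (satSubmonoid N).FG := by
  classical
  obtain ⟨T, hT⟩ := hN
  let b := Module.Free.chooseBasis ℤ V
  let ι := Module.Free.ChooseBasisIndex ℤ V
  let e : V →+ (ι → ℚ) :=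
    { toFun := fun v j => ((b.repr v) j : ℚ)
      map_zero' := by ext j; simp
      map_add' := by intro x y; ext j; push_cast [map_add]; simp }
  have he : ∀ (v : V) (j : ι), e v j = ((b.repr v) j : ℚ) := fun _ _ => rfl
  have einj : Function.Injective e := by
    intro x y h
    apply b.repr.injective
    ext j
    have := congrFun h j
    rw [he, he] at this
    exact_mod_cast this
  let D : Set V := {y | ∃ t : T → ℚ, (∀ i, 0 ≤ t i ∧ t i ≤ 1) ∧
      e y = ∑ i : T, t i • e (i : V)}
  -- T ⊆ sat N
  have hTN : (T : Set V) ⊆ (N : Set V) := hT ▸ subset_closure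
  have hTsub : (T : Set V) ⊆ (satSubmonoid N : Set V) := fun x hx =>
    ⟨1, one_pos, by simpa using hTN hx⟩
  -- D is finite
  have hDfin : D.Finite := by
    set B : ι → ℤ := fun j => ∑ i : T, |b.repr (i : V) j| with hB
    have key : ∀ y ∈ D, ∀ j, b.repr y j ∈ Finset.Icc (-B j) (B j) := by
      rintro y ⟨t, ht, hy⟩ j
      rw [Finset.mem_Icc, ← abs_le]
      have h1 : |(b.repr y j : ℚ)| ≤ ((B j : ℤ) : ℚ) := by
        have hyj : (b.repr y j : ℚ) = ∑ i : T, t i * (b.repr (i : V) j : ℚ) := by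
          have := congrFun hy j
          rw [he] at this
          simpa [Finset.sum_apply, he] using this
        rw [hyj, hB]
        push_cast
        calc |∑ i : T, t i * (b.repr (i : V) j : ℚ)|
            ≤ ∑ i : T, |t i * (b.repr (i : V) j : ℚ)| := Finset.abs_sum_le_sum_abs _ _
          _ ≤ ∑ i : T, |(b.repr (i : V) j : ℚ)| := by
              refine Finset.sum_le_sum fun i _ => ?_
              rw [abs_mul]
              calc |t i| * |(b.repr (i : V) j : ℚ)|
                  ≤ 1 * |(b.repr (i : V) j : ℚ)| := by
                    apply mul_le_mul_of_nonneg_right _ (abs_nonneg _)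
                    rw [abs_of_nonneg (ht i).1]; exact (ht i).2
                _ = _ := one_mul _
      exact_mod_cast h1
    have Finj : Function.Injective (fun y : V => fun j : ι => b.repr y j) := by
      intro x y h
      apply b.repr.injective
      ext j
      exact congrFun h j
    apply Set.Finite.of_finite_image _ Finj.injOn
    apply Set.Finite.subset (Finset.Icc (fun j => -B j) (fun j => B j)).finite_toSet
    rintro _ ⟨y, hy, rfl⟩
    simp only [Finset.coe_Icc, Set.mem_Icc, Pi.le_def]
    constructor
    · intro j
      exact (Finset.mem_Icc.1 (key y hy j)).1
    · intro j
      exact (Finset.mem_Icc.1 (key y hy j)).2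
  -- D ⊆ sat N
  have hDsub : D ⊆ (satSubmonoid N : Set V) := by
    rintro y ⟨t, ht, hy⟩
    set a : ℕ := ∏ i : T, (t i).den with ha
    have hapos : 0 < a := Finset.prod_pos fun i _ => (t i).pos
    have hc : ∀ i : T, ∃ c : ℕ, (c : ℚ) = (a : ℚ) * t i := by
      intro i
      obtain ⟨k, hk⟩ := Finset.dvd_prod_of_mem (fun i => (t i).den) (Finset.mem_univ i)
      have hden : ((t i).den : ℚ) * t i = ((t i).num : ℚ) := by
        rw [mul_comm]; exact_mod_cast Rat.mul_den_eq_num (t i)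
      refine ⟨k * (t i).num.toNat, ?_⟩
      have hnum : (0 : ℤ) ≤ (t i).num := Rat.num_nonneg.2 (ht i).1
      have : ((a : ℕ) : ℚ) = ((t i).den : ℚ) * (k : ℚ) := by
        rw [ha]; exact_mod_cast congrArg (fun n : ℕ => (n : ℚ)) hk
      rw [this, mul_assoc, mul_comm (k : ℚ), ← mul_assoc, hden]
      push_cast
      have h2 : (((t i).num.toNat : ℕ) : ℚ) = ((t i).num : ℚ) := by
        exact_mod_cast Int.toNat_of_nonneg hnum
      rw [h2, mul_comm]
    choose c hcspec using hc
    refine ⟨a, hapos, ?_⟩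
    have key : a • y = ∑ i : T, c i • (i : V) := by
      apply einj
      rw [map_nsmul, map_sum, hy]
      rw [← Nat.cast_smul_eq_nsmul ℚ a, Finset.smul_sum]
      refine Finset.sum_congr rfl fun i _ => ?_
      rw [map_nsmul, ← Nat.cast_smul_eq_nsmul ℚ (c i), smul_smul, hcspec]
    rw [key]
    exact sum_mem _ fun i _ => N.nsmul_mem (hTN i.2) _
  -- sat N ⊆ closure (D ∪ T)
  have hmain : (satSubmonoid N : Set V) ⊆
      ↑(closure (↑hDfin.toFinset ∪ ↑T : Set V)) := by
    rintro x ⟨a, hapos, hax⟩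
    rw [← hT] at hax
    obtain ⟨cc, hcc⟩ := (mem_closure_finset_iff T _).1 hax
    set q : T → ℕ := fun i => cc i / a with hq
    set r : T → ℕ := fun i => cc i % a with hr
    set y : V := x - ∑ i : T, q i • (i : V) with hy
    have haQ : ((a : ℚ)) ≠ 0 := by exact_mod_cast hapos.ne'
    have hyD : y ∈ D := by
      refine ⟨fun i => (r i : ℚ) / a, fun i => ⟨by positivity, ?_⟩, ?_⟩
      · rw [div_le_one (by exact_mod_cast hapos)]
        exact_mod_cast (Nat.mod_lt _ hapos).le
      · apply smul_right_injective (ι → ℚ) haQ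
        show (a : ℚ) • e y = (a : ℚ) • ∑ i : T, ((r i : ℚ) / a) • e (i : V)
        have hex : (a : ℚ) • e x = ∑ i : T, (cc i : ℚ) • e (i : V) := by
          rw [Nat.cast_smul_eq_nsmul, ← map_nsmul, hcc, map_sum]
          exact Finset.sum_congr rfl fun i _ => by
            rw [map_nsmul, Nat.cast_smul_eq_nsmul]
        rw [hy, map_sub, map_sum, smul_sub, hex, Finset.smul_sum, Finset.smul_sum,
          ← Finset.sum_sub_distrib]
        refine Finset.sum_congr rfl fun i _ => ?_
        rw [map_nsmul, ← Nat.cast_smul_eq_nsmul ℚ (q i), smul_smul, smul_smul,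
          mul_div_cancel₀ _ haQ, ← sub_smul]
        congr 1
        have hcast : (a : ℚ) * q i + r i = cc i := by exact_mod_cast Nat.div_add_mod (cc i) a
        linarith
    have hyc : y ∈ closure (↑hDfin.toFinset ∪ ↑T : Set V) :=
      subset_closure (Set.mem_union_left _ (hDfin.mem_toFinset.2 hyD))
    have hsc : (∑ i : T, q i • (i : V)) ∈ closure (↑hDfin.toFinset ∪ ↑T : Set V) :=
      sum_mem _ fun i _ => nsmul_mem (subset_closure (Set.mem_union_right _ i.2)) _
    have : x = y + ∑ i : T, q i • (i : V) := by rw [hy]; abel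
    rw [this]
    exact add_mem hyc hsc
  refine ⟨hDfin.toFinset ∪ T, le_antisymm ?_ ?_⟩
  · rw [Finset.coe_union, closure_le]
    exact Set.union_subset (by simpa using hDsub) hTsub
  · intro x hx
    simpa [Finset.coe_union] using hmain hx

-- a nonzero integer multiple kills ⇒ a positive natural multiple kills
private lemma natAbs_smul_eq_zero {G : Type*} [AddCommGroup G] {z : ℤ} {w : G}
    (h : z • w = 0) : z.natAbs • w = 0 := by
  rw [← natCast_zsmul]
  rcases Int.natAbs_eq z with he | he
  · rw [← he, h]
  · have h2 : (z.natAbs : ℤ) = -z := by omega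
    rw [h2, neg_zsmul, h, neg_zero]

open AddSubmonoid in
private lemma sat_fg {G : Type*} [AddCommGroup G] (hG : (⊤ : AddSubgroup G).FG)
    (N : AddSubmonoid G) (hN : N.FG) : (satSubmonoid N).FG := by
  classical
  have hMF : Module.Finite ℤ G := Module.Finite.iff_addGroup_fg.2 ⟨hG⟩
  have hNoeth : IsNoetherian ℤ G := isNoetherian_of_isNoetherianRing_of_finite ℤ G
  set τ : Submodule ℤ G := Submodule.torsion ℤ G with hτ
  let π : G →ₗ[ℤ] (G ⧸ τ) := τ.mkQ
  have hπs : Function.Surjective π := Submodule.mkQ_surjective τ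
  haveI : Module.Free ℤ (G ⧸ τ) := Module.free_of_finite_type_torsion_free'
  set N' : AddSubmonoid (G ⧸ τ) := N.map π.toAddMonoidHom with hN'
  have hN'fg : N'.FG := hN.map _
  obtain ⟨S', hS'⟩ := gordan N' hN'fg
  -- torsion elements are in the saturation
  have htors : ∀ x ∈ τ, x ∈ satSubmonoid N := by
    intro x hx
    obtain ⟨⟨z, hz⟩, hzx⟩ := (Submodule.mem_torsion_iff x).1 hx
    have hzne : z ≠ 0 := nonZeroDivisors.ne_zero hz
    refine mem_satSubmonoid.2 ⟨z.natAbs, Int.natAbs_pos.2 hzne, ?_⟩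
    have : z.natAbs • x = 0 := natAbs_smul_eq_zero hzx
    rw [this]; exact N.zero_mem
  -- key: x ∈ sat N ↔ π x ∈ sat N'
  have hkey : ∀ x : G, x ∈ satSubmonoid N ↔ π x ∈ satSubmonoid N' := by
    intro x
    constructor
    · rintro hx
      obtain ⟨a, ha, hax⟩ := mem_satSubmonoid.1 hx
      exact mem_satSubmonoid.2 ⟨a, ha, by rw [← map_nsmul]; exact ⟨a • x, hax, rfl⟩⟩
    · intro hx
      obtain ⟨a, ha, hax⟩ := mem_satSubmonoid.1 hx
      obtain ⟨n, hn, hna⟩ := hax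
      have hker : a • x - n ∈ τ := by
        rw [← Submodule.ker_mkQ τ, LinearMap.mem_ker, map_sub]
        have h3 : π (a • x) = a • π x := map_nsmul π a x
        exact sub_eq_zero_of_eq (h3.trans hna.symm)
      obtain ⟨⟨z, hz⟩, hzx⟩ := (Submodule.mem_torsion_iff _).1 hker
      have hzne : z ≠ 0 := nonZeroDivisors.ne_zero hz
      have h0 : z.natAbs • (a • x - n) = 0 := natAbs_smul_eq_zero hzx
      refine mem_satSubmonoid.2 ⟨z.natAbs * a, Nat.mul_pos (Int.natAbs_pos.2 hzne) ha, ?_⟩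
      have : (z.natAbs * a) • x = z.natAbs • n := by
        rw [mul_smul, ← sub_eq_zero]
        rw [← smul_sub]
        exact h0
      rw [this]
      exact N.nsmul_mem hn _
  -- generators for the torsion part
  obtain ⟨Tf, hTf⟩ := IsNoetherian.noetherian τ
  set σ : (G ⧸ τ) → G := Function.surjInv hπs with hσ
  have hσπ : ∀ v, π (σ v) = v := Function.surjInv_eq hπs
  set A : Finset G := Tf ∪ Tf.image (fun x => -x) with hA
  set B : Finset G := S'.image σ with hB
  have hAτ : closure (A : Set G) = τ.toAddSubgroup.toAddSubmonoid := by
    have h1 : (A : Set G) = (↑Tf ∪ -↑Tf : Set G) := by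
      rw [hA, Finset.coe_union, Finset.coe_image]
      congr 1
      ext z
      simp only [Set.mem_image, Set.mem_neg, Finset.mem_coe]
      constructor
      · rintro ⟨w, hw, rfl⟩; simpa using hw
      · intro hw; exact ⟨-z, hw, by simp⟩
    rw [h1, ← AddSubgroup.closure_toAddSubmonoid, ← Submodule.span_int_eq_addSubgroupClosure,
      hTf]
  refine ⟨A ∪ B, ?_⟩
  rw [Finset.coe_union]
  apply le_antisymm
  · rw [closure_le]
    rintro x (hx | hx)
    · have hxτ : x ∈ τ := by
        have h2 : x ∈ closure (A : Set G) := subset_closure hx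
        rw [hAτ] at h2
        exact h2
      exact htors x hxτ
    · rw [Finset.mem_coe, hB, Finset.mem_image] at hx
      obtain ⟨s, hs, rfl⟩ := hx
      refine (hkey _).2 ?_
      rw [hσπ]
      exact hS' ▸ subset_closure hs
  · intro x hx
    have hπx : π x ∈ closure (S' : Set (G ⧸ τ)) := by
      rw [hS']
      exact (hkey x).1 hx
    obtain ⟨c, hc⟩ := (mem_closure_finset_iff S' _).1 hπx
    set y : G := ∑ i : S', c i • σ (i : G ⧸ τ) with hy
    have hπy : π y = π x := by
      rw [hy, map_sum, hc]
      exact Finset.sum_congr rfl fun i _ => by rw [map_nsmul, hσπ]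
    have hxy : x - y ∈ τ := by
      rw [← Submodule.ker_mkQ τ, LinearMap.mem_ker, map_sub, hπy, sub_self]
    have h1 : x - y ∈ closure ((A : Set G) ∪ (B : Set G)) := by
      apply AddSubmonoid.closure_mono Set.subset_union_left
      rw [hAτ]
      exact hxy
    have h2 : y ∈ closure ((A : Set G) ∪ (B : Set G)) := by
      rw [hy]
      refine sum_mem _ fun i _ => nsmul_mem (subset_closure (Set.mem_union_right _ ?_)) _
      rw [Finset.mem_coe, hB, Finset.mem_image]
      exact ⟨(i : G ⧸ τ), i.2, rfl⟩
    have hxeq : x = (x - y) + y := by abel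
    rw [hxeq]
    exact add_mem h1 h2

/-- Let `M` be a fine monoid (integral and finitely generated) and `K` a field.  Then the
saturation `M^sat` of `M` inside its groupification `M^gp` is a finitely generated monoid. -/
theorem stmt1 {M G : Type*} [AddCommMonoid M] [AddCommGroup G] (K : Type*) [Field K]
    (η : M →+ G) (hgp : IsGroupification η) (hinj : Function.Injective η)
    (hfg : AddMonoid.FG M) :
    ∃ S : Finset G,
      (↑(AddSubmonoid.closure (S : Set G)) : Set G) =
        saturationOf (↑(AddMonoidHom.mrange η) : Set G) := by
  classical
  set N : AddSubmonoid G := AddMonoidHom.mrange η with hNdef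
  have hNfg : N.FG := by
    have h1 : ((⊤ : AddSubmonoid M).map η).FG := (AddMonoid.fg_def.1 hfg).map η
    rwa [← AddMonoidHom.mrange_eq_map] at h1
  have hGfg : (⊤ : AddSubgroup G).FG := by
    obtain ⟨T, hT⟩ := hNfg
    refine ⟨T, ?_⟩
    rw [eq_top_iff]
    intro x _
    obtain ⟨a, b, rfl⟩ := hgp.1 x
    have hmem : ∀ m : M, η m ∈ AddSubgroup.closure (T : Set G) := by
      intro m
      have h2 : η m ∈ N := ⟨m, rfl⟩
      rw [← hT] at h2
      exact AddSubgroup.le_closure_toAddSubmonoid _ h2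
    exact sub_mem (hmem a) (hmem b)
  obtain ⟨S, hS⟩ := sat_fg hGfg N hNfg
  exact ⟨S, by rw [hS]; rfl⟩
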